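/- arXiv:2006.16781 — 5 statements merged into one kernel-verified Lean document; each statement's English description precedes it below -/
import Mathlib

section
/- Let f : ℝⁿ → ℝ, A a q × n real matrix, b ∈ ℝ^q, and let θ(λ) = inf_{x ∈ ℝⁿ} [ f(x) + λᵀ(Ax − b) ] be the dual function. If θ is strongly concave on ℝ^q (with some constant α > 0 with respect to the Euclidean norm) and 0 belongs to the effective domain of the Legendre–Fenchel conjugate f* (i.e., f is bounded below), then Ker(Aᵀ) = {0}, i.e., the rows of A are linearly independent. -/
open scoped Matrix

private lemma ereal_iInf_coe {ι : Type*} [Nonempty ι] (g : ι → ℝ) (hb : BddBelow (Set.range g)) :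
    (⨅ i, ((g i : EReal))) = ((⨅ i, g i : ℝ) : EReal) := by
  apply le_antisymm
  · apply le_of_forall_gt_imp_ge_of_dense
    intro a ha
    induction a using EReal.rec with
    | bot => exact absurd ha (by simp)
    | top => exact le_top
    | coe r =>
      obtain ⟨i, hi⟩ := exists_lt_of_ciInf_lt (EReal.coe_lt_coe_iff.1 ha)
      exact iInf_le_of_le i (by exact_mod_cast hi.le)
  · exact le_iInf fun i => EReal.coe_le_coe_iff.2 (ciInf_le hb i)

/-- If the dual function `θ(λ) = inf_x [f(x) + λᵀ(Ax − b)]` is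
strongly concave on `ℝ^q` with some constant `α > 0` (Euclidean norm) and `f` is
bounded below (i.e. `0 ∈ dom f*`), then `Ker(Aᵀ) = {0}`, i.e. the rows of `A`
are linearly independent. -/
theorem rows_linearly_independent_of_dual_strongly_concave
    {n q : ℕ} (f : EuclideanSpace ℝ (Fin n) → ℝ)
    (A : Matrix (Fin q) (Fin n) ℝ)
    (b : EuclideanSpace ℝ (Fin q))
    (θ : EuclideanSpace ℝ (Fin q) → EReal)
    (hθ : θ = fun lam => ⨅ x : EuclideanSpace ℝ (Fin n),
      ((f x + ∑ i, lam i * (A.mulVec x i - b i) : ℝ) : EReal))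
    (hbdd : BddBelow (Set.range f))
    (α : ℝ) (hα : 0 < α)
    (hsc : ∀ l1 l2 : EuclideanSpace ℝ (Fin q), ∀ r1 r2 : ℝ,
      θ l1 = (r1 : EReal) → θ l2 = (r2 : EReal) →
      ∀ t : ℝ, 0 ≤ t → t ≤ 1 →
      ((t * r1 + (1 - t) * r2
        + α * (t * (1 - t)) / 2 * ‖l1 - l2‖ ^ 2 : ℝ) : EReal)
        ≤ θ (t • l1 + (1 - t) • l2)) :
    (∀ lam : Fin q → ℝ, Aᵀ.mulVec lam = 0 → lam = 0) ∧ LinearIndependent ℝ A := by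
  set m : ℝ := ⨅ x, f x with hm
  -- value of θ on kernel vectors
  have key : ∀ μ : EuclideanSpace ℝ (Fin q), Aᵀ.mulVec μ = 0 →
      θ μ = ((m - ∑ i, μ i * b i : ℝ) : EReal) := by
    intro μ hμ
    have hzero : ∀ x : EuclideanSpace ℝ (Fin n), (∑ i, μ i * A.mulVec x i) = 0 := by
      intro x
      have : (∑ i, μ i * A.mulVec x i) = ∑ j, (Aᵀ.mulVec μ j) * x j := by
        simp only [Matrix.mulVec, dotProduct, Matrix.transpose_apply,
          Finset.sum_mul, Finset.mul_sum]
        rw [Finset.sum_comm]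
        congr 1; ext i; congr 1; ext j; ring
      simp [this, hμ]
    have hfun : ∀ x : EuclideanSpace ℝ (Fin n),
        (f x + ∑ i, μ i * (A.mulVec x i - b i)) = f x - ∑ i, μ i * b i := by
      intro x
      have : (∑ i, μ i * (A.mulVec x i - b i))
          = (∑ i, μ i * A.mulVec x i) - ∑ i, μ i * b i := by
        rw [← Finset.sum_sub_distrib]; congr 1; ext i; ring
      rw [this, hzero]; ring
    have hb2 : BddBelow (Set.range fun x => f x - ∑ i, μ i * b i) := by
      obtain ⟨c, hc⟩ := hbdd
      exact ⟨c - ∑ i, μ i * b i, by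
        rintro y ⟨x, rfl⟩
        exact sub_le_sub_right (hc ⟨x, rfl⟩) _⟩
    have : θ μ = ⨅ x : EuclideanSpace ℝ (Fin n),
        ((f x - ∑ i, μ i * b i : ℝ) : EReal) := by
      rw [hθ]; simp only [hfun]
    rw [this, ereal_iInf_coe _ hb2]
    congr 1
    rw [hm]
    have := (OrderIso.subRight (∑ i, μ i * b i)).map_ciInf (f := f) hbdd
    simpa [OrderIso.subRight_apply] using this.symm
  have main : ∀ lam : Fin q → ℝ, Aᵀ.mulVec lam = 0 → lam = 0 := by
    intro lam hlam
    set μ : EuclideanSpace ℝ (Fin q) := WithLp.toLp 2 lam with hμdef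
    have hneg : Aᵀ.mulVec (-μ) = 0 := by
      rw [Matrix.mulVec_neg]; simp [hμdef, hlam]
    have h1 := key μ hlam
    have h2 := key (-μ) hneg
    have h0 : θ ((1/2 : ℝ) • μ + (1 - 1/2 : ℝ) • (-μ)) = ((m - ∑ i, (0 : EuclideanSpace ℝ (Fin q)) i * b i : ℝ) : EReal) := by
      have hv : ((1/2 : ℝ) • μ + (1 - 1/2 : ℝ) • (-μ)) = (0 : EuclideanSpace ℝ (Fin q)) := by
        module
      rw [hv]
      exact key 0 (by simp)
    have hineq := hsc μ (-μ) _ _ h1 h2 (1/2) (by norm_num) (by norm_num)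
    rw [h0] at hineq
    have hR : (1/2 * (m - ∑ i, μ i * b i) + (1 - 1/2) * (m - ∑ i, (-μ) i * b i)
        + α * (1/2 * (1 - 1/2)) / 2 * ‖μ - (-μ)‖ ^ 2 : ℝ)
        ≤ (m - ∑ i, (0 : EuclideanSpace ℝ (Fin q)) i * b i : ℝ) :=
      EReal.coe_le_coe_iff.1 hineq
    have hsum : (∑ i, (-μ) i * b i) = -∑ i, μ i * b i := by
      rw [← Finset.sum_neg_distrib]; congr 1; ext i; simp
    have hsum0 : (∑ i, (0 : EuclideanSpace ℝ (Fin q)) i * b i) = 0 := by simp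
    rw [hsum, hsum0] at hR
    have hnorm : ‖μ - (-μ)‖ = 2 * ‖μ‖ := by
      rw [sub_neg_eq_add, ← two_smul ℝ μ, norm_smul]
      simp
    rw [hnorm] at hR
    have : ‖μ‖ ^ 2 ≤ 0 := by nlinarith
    have : ‖μ‖ = 0 := by
      have h := norm_nonneg μ
      nlinarith
    have : μ = 0 := norm_eq_zero.1 this
    have := congrArg WithLp.ofLp this
    simpa [hμdef] using this
  refine ⟨main, ?_⟩
  refine Fintype.linearIndependent_iff.2 ?_
  intro g hg i
  have : Aᵀ.mulVec g = 0 := by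
    ext j
    have := congrFun hg j
    simp only [Matrix.mulVec, dotProduct, Matrix.transpose_apply]
    simpa [Finset.sum_apply, mul_comm] using this
  exact congrFun (main g this) i
end

section
/- Let Q₀ be an n × n nonzero positive semidefinite real matrix, a₀ ∈ Im(Q₀), b₀ ∈ ℝ, and f(x) = ½ xᵀQ₀x + a₀ᵀx + b₀. Then the Legendre–Fenchel conjugate of f is f*(x) = −b₀ + ½(x − a₀)ᵀQ₀⁺(x − a₀) if x ∈ Im(Q₀), and f*(x) = +∞ otherwise, where Q₀⁺ is the Moore–Penrose pseudoinverse of Q₀. -/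
open scoped Matrix

/-- For `f(x) = ½xᵀQ₀x + a₀ᵀx + b₀` with `Q₀ ≠ 0` positive
semidefinite and `a₀ ∈ Im(Q₀)`, the Legendre–Fenchel conjugate is
`f*(x) = −b₀ + ½(x−a₀)ᵀQ₀⁺(x−a₀)` on `Im(Q₀)` and `+∞` elsewhere, where the
Moore–Penrose pseudoinverse `Q₀⁺` is characterized by the four Penrose
identities. -/
theorem conjugate_of_convex_quadratic
    {n : ℕ} (Q : Matrix (Fin n) (Fin n) ℝ)
    (hQ : Q.PosSemidef) (hQ0 : Q ≠ 0)
    (a0 : Fin n → ℝ) (ha0 : ∃ u : Fin n → ℝ, Q.mulVec u = a0) (b0 : ℝ)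
    (f : EuclideanSpace ℝ (Fin n) → ℝ)
    (hf : f = fun x : EuclideanSpace ℝ (Fin n) =>
      (1 / 2) * (∑ i, x i * Q.mulVec (WithLp.ofLp x) i) + (∑ i, a0 i * x i) + b0)
    -- `Qp` is the Moore–Penrose pseudoinverse of `Q`
    (Qp : Matrix (Fin n) (Fin n) ℝ)
    (hQp1 : Q * Qp * Q = Q) (hQp2 : Qp * Q * Qp = Qp)
    (hQp3 : (Q * Qp)ᵀ = Q * Qp) (hQp4 : (Qp * Q)ᵀ = Qp * Q)
    (fstar : EuclideanSpace ℝ (Fin n) → EReal)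
    (hfstar : fstar = fun y => ⨆ x : EuclideanSpace ℝ (Fin n),
      ((∑ j, y j * x j - f x : ℝ) : EReal)) :
    ∀ y : EuclideanSpace ℝ (Fin n),
      ((∃ u : Fin n → ℝ, ∀ j, Q.mulVec u j = y j) →
        fstar y = ((-b0 + (1 / 2) *
          ∑ i, (y i - a0 i) * Qp.mulVec (fun j => y j - a0 j) i : ℝ) : EReal)) ∧
      ((¬ ∃ u : Fin n → ℝ, ∀ j, Q.mulVec u j = y j) → fstar y = ⊤) := by
  intro y
  have hQsymm : Qᵀ = Q := hQ.1
  have hsymm : ∀ a b : Fin n → ℝ, a ⬝ᵥ Q *ᵥ b = b ⬝ᵥ Q *ᵥ a := fun a b => by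
    rw [Matrix.dotProduct_mulVec, ← Matrix.mulVec_transpose, hQsymm, dotProduct_comm]
  have hpos : ∀ x : Fin n → ℝ, 0 ≤ x ⬝ᵥ Q *ᵥ x := fun x => by simpa using hQ.dotProduct_mulVec_nonneg x
  obtain ⟨v, hv⟩ := ha0
  set c : Fin n → ℝ := fun j => y j - a0 j with hc
  have hbody : ∀ x : EuclideanSpace ℝ (Fin n),
      (∑ j, y j * x j - f x : ℝ) = c ⬝ᵥ x - (1 / 2) * (x ⬝ᵥ Q *ᵥ x) - b0 := by
    intro x
    rw [hf]
    show (y ⬝ᵥ x) - ((1 / 2) * (x ⬝ᵥ (Q *ᵥ x)) + a0 ⬝ᵥ x + b0) = _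
    simp only [hc, dotProduct, sub_mul, Finset.sum_sub_distrib]
    ring
  have key : fstar y = ⨆ x : EuclideanSpace ℝ (Fin n),
      ((c ⬝ᵥ x - (1 / 2) * (x ⬝ᵥ Q *ᵥ x) - b0 : ℝ) : EReal) := by
    rw [hfstar]
    exact iSup_congr fun x => by rw [hbody x]
  constructor
  · rintro ⟨u, hu⟩
    have hy : Q *ᵥ u = y := funext hu
    set w : Fin n → ℝ := u - v with hw
    have hcw : Q *ᵥ w = c := by
      funext j
      simp [hw, Matrix.mulVec_sub, hv, hy, hc]
    set M : ℝ := -b0 + (1 / 2) * (w ⬝ᵥ Q *ᵥ w) with hM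
    have hub : ∀ x : Fin n → ℝ, c ⬝ᵥ x - (1 / 2) * (x ⬝ᵥ Q *ᵥ x) - b0 ≤ M := by
      intro x
      have h1 := hpos (x - w)
      have h2 : (x - w) ⬝ᵥ Q *ᵥ (x - w)
          = x ⬝ᵥ Q *ᵥ x - x ⬝ᵥ Q *ᵥ w - w ⬝ᵥ Q *ᵥ x + w ⬝ᵥ Q *ᵥ w := by
        simp only [Matrix.mulVec_sub, sub_dotProduct, dotProduct_sub]
        ring
      have h3 : c ⬝ᵥ x = w ⬝ᵥ Q *ᵥ x := by
        rw [← hcw, dotProduct_comm]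
        exact hsymm x w
      have h4 : x ⬝ᵥ Q *ᵥ w = w ⬝ᵥ Q *ᵥ x := hsymm x w
      rw [hM]
      linarith
    have hattain : c ⬝ᵥ w - (1 / 2) * (w ⬝ᵥ Q *ᵥ w) - b0 = M := by
      have h3 : c ⬝ᵥ w = w ⬝ᵥ Q *ᵥ w := by rw [← hcw, dotProduct_comm]
      rw [hM, h3]; ring
    have hval : (-b0 + (1 / 2) *
        ∑ i, (y i - a0 i) * Qp.mulVec (fun j => y j - a0 j) i : ℝ) = M := by
      have hd : (∑ i, (y i - a0 i) * Qp.mulVec (fun j => y j - a0 j) i)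
          = c ⬝ᵥ Qp *ᵥ c := rfl
      have hQpQ : c ⬝ᵥ Qp *ᵥ c = w ⬝ᵥ Q *ᵥ w := by
        rw [← hcw, Matrix.dotProduct_mulVec, Matrix.vecMul_mulVec, hQsymm,
          Matrix.dotProduct_mulVec, Matrix.vecMul_vecMul, Matrix.mul_assoc,
          ← Matrix.mul_assoc, hQp1, ← Matrix.dotProduct_mulVec]
      rw [hd, hQpQ, hM]
    rw [key, hval]
    apply le_antisymm
    · exact iSup_le fun x => EReal.coe_le_coe_iff.mpr (hub x)
    · exact le_iSup_of_le (WithLp.toLp 2 w) (EReal.coe_le_coe_iff.mpr hattain.ge)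
  · intro hns
    set S : Submodule ℝ (EuclideanSpace ℝ (Fin n)) := LinearMap.range
        ((WithLp.linearEquiv 2 ℝ (Fin n → ℝ)).symm.toLinearMap ∘ₗ Matrix.mulVecLin Q)
      with hS
    have hmemS : ∀ z : EuclideanSpace ℝ (Fin n), z ∈ S ↔ ∃ u : Fin n → ℝ, Q *ᵥ u = z := by
      intro z
      constructor
      · rintro ⟨u, hu⟩; exact ⟨u, by subst hu; rfl⟩
      · rintro ⟨u, hu⟩; exact ⟨u, by show WithLp.toLp 2 (Q *ᵥ u) = z; rw [hu]⟩
    have hcS : (WithLp.toLp 2 c : EuclideanSpace ℝ (Fin n)) ∉ S := by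
      intro hmem
      obtain ⟨u, hu⟩ := (hmemS (WithLp.toLp 2 c)).mp hmem
      refine hns ⟨u + v, fun j => ?_⟩
      have : Q *ᵥ (u + v) = c + a0 := by rw [Matrix.mulVec_add, hu, hv]
      have hj := congrFun this j
      simp only [hc] at hj ⊢
      rw [hj]; show y j - a0 j + a0 j = y j; ring
    set cE : EuclideanSpace ℝ (Fin n) := WithLp.toLp 2 c with hcE
    set q : EuclideanSpace ℝ (Fin n) :=
      cE - (S.orthogonalProjectionOnto cE : EuclideanSpace ℝ (Fin n)) with hq
    have hqo : q ∈ Sᗮ := S.sub_starProjection_mem_orthogonal cE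
    have hq0 : q ≠ 0 := by
      intro h
      apply hcS
      rw [hq] at h
      rw [sub_eq_zero.mp h]
      exact SetLike.coe_mem _
    have hinner : ∀ a b : EuclideanSpace ℝ (Fin n), inner ℝ a b = a ⬝ᵥ b := by
      intro a b
      simp [PiLp.inner_apply, RCLike.inner_apply, dotProduct, mul_comm]
    have hQq : Q *ᵥ q = 0 := by
      have h1 : ∀ u' : Fin n → ℝ, (Q *ᵥ u') ⬝ᵥ q = 0 := by
        intro u'
        have hm : (WithLp.toLp 2 (Q *ᵥ u') : EuclideanSpace ℝ (Fin n)) ∈ S := (hmemS _).mpr ⟨u', rfl⟩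
        have := (Submodule.mem_orthogonal S q).mp hqo _ hm
        rw [hinner] at this
        exact this
      have h2 : (Q *ᵥ q) ⬝ᵥ (Q *ᵥ q) = 0 := by
        have := h1 (Q *ᵥ q)
        calc (Q *ᵥ q) ⬝ᵥ (Q *ᵥ q) = q ⬝ᵥ Q *ᵥ (Q *ᵥ q) := hsymm _ _
          _ = (Q *ᵥ (Q *ᵥ q)) ⬝ᵥ q := dotProduct_comm _ _
          _ = 0 := this
      exact dotProduct_self_eq_zero.mp h2
    have hcq : cE ⬝ᵥ q = q ⬝ᵥ q := by
      have hp : cE - q ∈ S := by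
        rw [hq]
        simpa using SetLike.coe_mem (S.orthogonalProjectionOnto cE)
      have h0 : inner ℝ (cE - q) q = 0 :=
        (Submodule.mem_orthogonal S q).mp hqo _ hp
      rw [inner_sub_left, hinner, hinner] at h0
      linarith
    have hqq : 0 < q ⬝ᵥ q := by
      rcases lt_or_eq_of_le (Finset.sum_nonneg fun i _ => mul_self_nonneg (q i)) with h | h
      · exact h
      · exact absurd ((WithLp.ofLp_eq_zero 2).mp (dotProduct_self_eq_zero.mp h.symm)) hq0
    rw [key, iSup_eq_top]
    intro b hb
    induction b using EReal.rec with
    | bot =>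
      exact ⟨0, bot_lt_iff_ne_bot.mpr (EReal.coe_ne_bot _)⟩
    | coe r =>
      refine ⟨((r + b0 + 1) / (q ⬝ᵥ q)) • q, ?_⟩
      have hz : Q *ᵥ (((r + b0 + 1) / (q ⬝ᵥ q)) • q) = 0 := by
        rw [Matrix.mulVec_smul, hQq, smul_zero]
      have hval : cE ⬝ᵥ (((r + b0 + 1) / (q ⬝ᵥ q)) • q : EuclideanSpace ℝ (Fin n))
          - (1 / 2) * ((((r + b0 + 1) / (q ⬝ᵥ q)) • q : EuclideanSpace ℝ (Fin n)) ⬝ᵥ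
              Q *ᵥ (((r + b0 + 1) / (q ⬝ᵥ q)) • q)) - b0 = r + 1 := by
        rw [hz, dotProduct_zero, WithLp.ofLp_smul, dotProduct_smul, hcq]
        have : ((r + b0 + 1) / (q ⬝ᵥ q)) • (q ⬝ᵥ q) = r + b0 + 1 := by
          rw [smul_eq_mul, div_mul_cancel₀ _ hqq.ne']
        rw [this]; ring
      erw [hval]
      exact EReal.coe_lt_coe_iff.mpr (by linarith)
    | top => exact absurd hb (lt_irrefl ⊤)
end

section
/- Let Q₀ be an n × n nonzero positive semidefinite real matrix, a₀ ∈ Im(Q₀), b₀ ∈ ℝ, and f(x) = ½ xᵀQ₀x + a₀ᵀx + b₀. Then the Legendre–Fenchel conjugate f* (equal to −b₀ + ½(x − a₀)ᵀQ₀⁺(x − a₀) on Im(Q₀) and +∞ elsewhere) is strongly convex on ℝⁿ with constant of strong convexity 1/λ_max(Q₀) with respect to the Euclidean norm. -/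
open scoped Matrix

section StronglyConvexAux

variable {n : ℕ} (Q : Matrix (Fin n) (Fin n) ℝ)

private lemma scq_symdot (hQ : Q.PosSemidef) (p q : Fin n → ℝ) :
    p ⬝ᵥ Q *ᵥ q = q ⬝ᵥ Q *ᵥ p := by
  have hQt : Qᵀ = Q := (Matrix.conjTranspose_eq_transpose_of_trivial Q).symm.trans hQ.1.eq
  rw [Matrix.dotProduct_mulVec, ← Matrix.mulVec_transpose, hQt, dotProduct_comm]

private lemma scq_eig_dot (hQ : Q.PosSemidef) (v : Fin n → ℝ) (i : Fin n) :
    ⇑(hQ.1.eigenvectorBasis i) ⬝ᵥ (Q *ᵥ v)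
      = hQ.1.eigenvalues i * (⇑(hQ.1.eigenvectorBasis i) ⬝ᵥ v) := by
  rw [scq_symdot Q hQ, hQ.1.mulVec_eigenvectorBasis, dotProduct_smul,
    dotProduct_comm]
  rfl

private lemma scq_dot_repr (hQ : Q.PosSemidef) (u w : Fin n → ℝ) :
    u ⬝ᵥ w = ∑ i, (⇑(hQ.1.eigenvectorBasis i) ⬝ᵥ u) * (⇑(hQ.1.eigenvectorBasis i) ⬝ᵥ w) := by
  have h := hQ.1.eigenvectorBasis.repr.inner_map_map
    (WithLp.toLp 2 u) (WithLp.toLp 2 w)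
  simp only [PiLp.inner_apply, RCLike.inner_apply, conj_trivial,
    OrthonormalBasis.repr_apply_apply] at h
  have e : u ⬝ᵥ w = ∑ x, w x * u x := by simp only [dotProduct, mul_comm]
  rw [e, ← h]
  simp only [dotProduct, mul_comm]

private lemma scq_eig_ortho (hQ : Q.PosSemidef) (i j : Fin n) :
    ⇑(hQ.1.eigenvectorBasis i) ⬝ᵥ ⇑(hQ.1.eigenvectorBasis j) = if i = j then 1 else 0 := by
  have h := hQ.1.eigenvectorBasis.orthonormal
  rw [orthonormal_iff_ite] at h
  have h2 := h i j
  rw [PiLp.inner_apply] at h2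
  rw [dotProduct_comm]; simpa [dotProduct] using h2

private lemma scq_lam_pos (hQ : Q.PosSemidef) (hQ0 : Q ≠ 0) (lam : ℝ)
    (hlam : lam = ⨆ i, hQ.1.eigenvalues i) : 0 < lam ∧ ∀ i, hQ.1.eigenvalues i ≤ lam := by
  have hb : BddAbove (Set.range hQ.1.eigenvalues) := (Set.finite_range _).bddAbove
  have hle : ∀ i, hQ.1.eigenvalues i ≤ lam := fun i => hlam ▸ le_ciSup hb i
  refine ⟨?_, hle⟩
  by_contra hneg
  push_neg at hneg
  have hzero : ∀ i, hQ.1.eigenvalues i = 0 := fun i =>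
    le_antisymm (le_trans (hle i) hneg) (hQ.eigenvalues_nonneg i)
  apply hQ0
  have hQv : ∀ v : Fin n → ℝ, Q *ᵥ v = 0 := by
    intro v
    have h : (Q *ᵥ v) ⬝ᵥ (Q *ᵥ v) = 0 := by
      rw [scq_dot_repr Q hQ]
      simp [scq_eig_dot Q hQ, hzero]
    exact (dotProduct_self_eq_zero).1 h
  ext i j
  have := congrFun (hQv (Pi.single j 1)) i
  simpa using this

private lemma scq_key_ineq (hQ : Q.PosSemidef) (lam : ℝ)
    (hle : ∀ i, hQ.1.eigenvalues i ≤ lam) (v : Fin n → ℝ) :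
    (Q *ᵥ v) ⬝ᵥ (Q *ᵥ v) ≤ lam * (v ⬝ᵥ (Q *ᵥ v)) := by
  rw [scq_dot_repr Q hQ (Q *ᵥ v) (Q *ᵥ v), scq_dot_repr Q hQ v (Q *ᵥ v), Finset.mul_sum]
  apply Finset.sum_le_sum
  intro i _
  rw [scq_eig_dot Q hQ]
  have h1 : 0 ≤ hQ.1.eigenvalues i := hQ.eigenvalues_nonneg i
  have h2 := hle i
  set c := ⇑(hQ.1.eigenvectorBasis i) ⬝ᵥ v with hc
  nlinarith [mul_nonneg (mul_nonneg h1 (sq_nonneg c)) (sub_nonneg.2 h2)]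

private lemma scq_dotProduct_sum (v : Fin n → ℝ) (f : Fin n → (Fin n → ℝ)) :
    v ⬝ᵥ (∑ j, f j) = ∑ j, v ⬝ᵥ f j := by
  simp only [dotProduct, Finset.sum_apply, Finset.mul_sum]
  exact Finset.sum_comm

private lemma scq_range_dich (hQ : Q.PosSemidef) (d : Fin n → ℝ) :
    (∃ u : Fin n → ℝ, Q *ᵥ u = d) ∨ (∃ w : Fin n → ℝ, Q *ᵥ w = 0 ∧ d ⬝ᵥ w ≠ 0) := by
  by_cases hc : ∀ i, hQ.1.eigenvalues i = 0 → ⇑(hQ.1.eigenvectorBasis i) ⬝ᵥ d = 0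
  · left
    set lam := hQ.1.eigenvalues with hlamdef
    set B : Fin n → (Fin n → ℝ) := fun i => ⇑(hQ.1.eigenvectorBasis i) with hBdef
    refine ⟨∑ j, (if lam j = 0 then 0 else (B j ⬝ᵥ d) / lam j) • B j, ?_⟩
    set u : Fin n → ℝ := ∑ j, (if lam j = 0 then 0 else (B j ⬝ᵥ d) / lam j) • B j with hu
    have hcoef : ∀ i, B i ⬝ᵥ (Q *ᵥ u) = B i ⬝ᵥ d := by
      intro i
      rw [scq_eig_dot Q hQ, hu, scq_dotProduct_sum]
      have : ∀ j, B i ⬝ᵥ ((if lam j = 0 then 0 else (B j ⬝ᵥ d) / lam j) • B j)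
          = (if lam j = 0 then 0 else (B j ⬝ᵥ d) / lam j) * (if i = j then 1 else 0) := by
        intro j
        rw [dotProduct_smul, scq_eig_ortho Q hQ i j]
        rfl
      rw [Finset.sum_congr rfl fun j _ => this j]
      rw [Finset.sum_eq_single i (fun j _ hj => by simp [Ne.symm hj]) (by simp)]
      by_cases h0 : lam i = 0
      · simp [h0, hBdef, hc i h0]
      · simp [h0]
        field_simp
        rw [hlamdef]; ring
    have hz : (Q *ᵥ u - d) ⬝ᵥ (Q *ᵥ u - d) = 0 := by
      rw [scq_dot_repr Q hQ]
      apply Finset.sum_eq_zero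
      intro i _
      rw [dotProduct_sub, hcoef i]
      simp [hBdef]
    have := dotProduct_self_eq_zero.1 hz
    exact sub_eq_zero.1 this
  · right
    push_neg at hc
    obtain ⟨i, h0, hd⟩ := hc
    refine ⟨⇑(hQ.1.eigenvectorBasis i), ?_, ?_⟩
    · rw [hQ.1.mulVec_eigenvectorBasis, h0, zero_smul]
    · rwa [dotProduct_comm]

end StronglyConvexAux

/-- For `f(x) = ½xᵀQ₀x + a₀ᵀx + b₀` with `Q₀ ≠ 0` positive
semidefinite and `a₀ ∈ Im(Q₀)`, the Legendre–Fenchel conjugate `f*` is strongly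
convex on `ℝⁿ` with constant `1/λ_max(Q₀)` with respect to the Euclidean norm
(the strong convexity inequality being required on the effective domain of `f*`). -/
theorem conjugate_of_convex_quadratic_strongly_convex
    {n : ℕ} (Q : Matrix (Fin n) (Fin n) ℝ)
    (hQ : Q.PosSemidef) (hQ0 : Q ≠ 0)
    (a0 : Fin n → ℝ) (ha0 : ∃ u : Fin n → ℝ, Q.mulVec u = a0) (b0 : ℝ)
    (f : EuclideanSpace ℝ (Fin n) → ℝ)
    (hf : f = fun x : EuclideanSpace ℝ (Fin n) => (1 / 2) * (∑ i, x i * Q.mulVec (WithLp.ofLp x) i) + (∑ i, a0 i * x i) + b0)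
    (fstar : EuclideanSpace ℝ (Fin n) → EReal)
    (hfstar : fstar = fun y => ⨆ x : EuclideanSpace ℝ (Fin n),
      ((∑ j, y j * x j - f x : ℝ) : EReal))
    (lamMax : ℝ) (hlamMax : lamMax = ⨆ i, hQ.1.eigenvalues i) :
    ∀ x y : EuclideanSpace ℝ (Fin n), fstar x ≠ ⊤ → fstar y ≠ ⊤ →
      ∀ t : ℝ, 0 ≤ t → t ≤ 1 →
      fstar (t • x + (1 - t) • y)
        ≤ ((t * (fstar x).toReal + (1 - t) * (fstar y).toReal
            - (1 / lamMax) * (t * (1 - t)) / 2 * ‖y - x‖ ^ 2 : ℝ) : EReal) := by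
  subst hf
  subst hfstar
  obtain ⟨hlampos, hle⟩ := scq_lam_pos Q hQ hQ0 lamMax hlamMax
  obtain ⟨u0, hu0⟩ := ha0
  -- evaluation of the conjugate on its effective domain
  have heval : ∀ (z : EuclideanSpace ℝ (Fin n)) (u : Fin n → ℝ),
      Q *ᵥ u = (fun j => z j - a0 j) →
      (⨆ x : EuclideanSpace ℝ (Fin n),
        ((∑ j, z j * x j - ((1 / 2) * (∑ i, x i * Q.mulVec x i)
          + (∑ i, a0 i * x i) + b0) : ℝ) : EReal))
        = (((u ⬝ᵥ (Q *ᵥ u)) / 2 - b0 : ℝ) : EReal) := by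
    intro z u hu
    apply le_antisymm
    · apply iSup_le
      intro x
      rw [EReal.coe_le_coe_iff]
      set X : Fin n → ℝ := ⇑x with hX
      have hzx : ∑ j, z j * x j = (Q *ᵥ u) ⬝ᵥ X + ∑ i, a0 i * x i := by
        rw [hu]
        rw [show (fun j => z j - a0 j) ⬝ᵥ X = ∑ j, (z j - a0 j) * x j from rfl]
        rw [← Finset.sum_add_distrib]
        exact Finset.sum_congr rfl fun j _ => by ring
      have h0 := hQ.dotProduct_mulVec_nonneg (X - u)
      rw [star_trivial, Matrix.mulVec_sub, sub_dotProduct, dotProduct_sub,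
        dotProduct_sub, scq_symdot Q hQ X u] at h0
      have hQuX : (Q *ᵥ u) ⬝ᵥ X = u ⬝ᵥ (Q *ᵥ X) := by
        rw [dotProduct_comm, scq_symdot Q hQ X u]
      have hxQx : ∑ i, x i * Q.mulVec x i = X ⬝ᵥ (Q *ᵥ X) := rfl
      rw [hzx, hQuX, hxQx]
      linarith
    · have hval : ((∑ j, z j * u j
          - ((1 / 2) * (∑ i, u i * Q.mulVec u i)
            + (∑ i, a0 i * u i) + b0) : ℝ) : EReal)
          = (((u ⬝ᵥ (Q *ᵥ u)) / 2 - b0 : ℝ) : EReal) := by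
        norm_cast
        have h1 : ∑ j, z j * u j = u ⬝ᵥ (Q *ᵥ u) + ∑ i, a0 i * u i := by
          have h2 : ∀ j, z j = (Q *ᵥ u) j + a0 j := by
            intro j; have := congrFun hu j; simp at this; linarith
          calc ∑ j, z j * u j = ∑ j, ((Q *ᵥ u) j * u j + a0 j * u j) := by
                exact Finset.sum_congr rfl fun j _ => by rw [h2 j]; ring
            _ = (Q *ᵥ u) ⬝ᵥ u + ∑ i, a0 i * u i := by rw [Finset.sum_add_distrib]; rfl
            _ = u ⬝ᵥ (Q *ᵥ u) + ∑ i, a0 i * u i := by rw [dotProduct_comm]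
        have hxQx : ∑ i, u i * (Q *ᵥ u) i = u ⬝ᵥ (Q *ᵥ u) := rfl
        rw [h1, hxQx]
        ring
      rw [← hval]
      exact le_iSup (fun x : EuclideanSpace ℝ (Fin n) =>
        ((∑ j, z j * x j - ((1 / 2) * (∑ i, x i * Q.mulVec x i)
          + (∑ i, a0 i * x i) + b0) : ℝ) : EReal)) (WithLp.toLp 2 u)
  -- if the conjugate is finite at z then z - a0 is in the range of Q
  have htop : ∀ z : EuclideanSpace ℝ (Fin n),
      (⨆ x : EuclideanSpace ℝ (Fin n),
        ((∑ j, z j * x j - ((1 / 2) * (∑ i, x i * Q.mulVec x i)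
          + (∑ i, a0 i * x i) + b0) : ℝ) : EReal)) ≠ ⊤ →
      ∃ u : Fin n → ℝ, Q *ᵥ u = (fun j => z j - a0 j) := by
    intro z hz
    rcases scq_range_dich Q hQ (fun j => z j - a0 j) with h | ⟨w, hw0, hwd⟩
    · exact h
    exfalso
    apply hz
    have ha0w : ∑ i, a0 i * w i = 0 := by
      have : a0 ⬝ᵥ w = 0 := by
        rw [← hu0, dotProduct_comm, scq_symdot Q hQ, hw0, dotProduct_zero]
      exact this
    set s : ℝ := (fun j => z j - a0 j) ⬝ᵥ w with hs
    have hval : ∀ t : ℝ, ((∑ j, z j * (t • w) j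
        - ((1 / 2) * (∑ i, (t • w) i * Q.mulVec (t • w) i) + (∑ i, a0 i * (t • w) i) + b0) : ℝ))
        = t * s - b0 := by
      intro t
      have h1 : Q *ᵥ (t • w) = 0 := by rw [Matrix.mulVec_smul, hw0, smul_zero]
      have h2 : ∑ i, (t • w) i * Q.mulVec (t • w) i = 0 := by
        rw [show ∑ i, (t • w) i * Q.mulVec (t • w) i = (t • w) ⬝ᵥ (Q *ᵥ (t • w)) from rfl,
          h1, dotProduct_zero]
      have h3 : ∑ i, a0 i * (t • w) i = t * ∑ i, a0 i * w i := by
        rw [Finset.mul_sum]; exact Finset.sum_congr rfl fun i _ => by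
          simp [Pi.smul_apply, smul_eq_mul]; ring
      have h4 : ∑ j, z j * (t • w) j = t * ∑ j, z j * w j := by
        rw [Finset.mul_sum]; exact Finset.sum_congr rfl fun i _ => by
          simp [Pi.smul_apply, smul_eq_mul]; ring
      have h5 : s = ∑ j, z j * w j - ∑ j, a0 j * w j := by
        rw [hs, show (fun j => z j - a0 j) ⬝ᵥ w = ∑ j, (z j - a0 j) * w j from rfl]
        rw [← Finset.sum_sub_distrib]
        exact Finset.sum_congr rfl fun j _ => by ring
      rw [h2, h3, h4, ha0w, h5, ha0w]
      ring
    rw [iSup_eq_top]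
    intro b hb
    induction b using EReal.rec with
    | bot => exact ⟨0, EReal.bot_lt_coe _⟩
    | coe r =>
        refine ⟨WithLp.toLp 2 (((r + 1 + b0) / s) • w), ?_⟩
        simp only [WithLp.ofLp_toLp]
        rw [hval ((r + 1 + b0) / s)]
        rw [div_mul_cancel₀ _ hwd]
        exact_mod_cast (by linarith : r < r + 1 + b0 - b0)
    | top => exact absurd hb (lt_irrefl ⊤)
  -- main argument
  intro x y hx hy t ht0 ht1
  obtain ⟨u, hu⟩ := htop x hx
  obtain ⟨v, hv⟩ := htop y hy
  set wv : Fin n → ℝ := t • u + (1 - t) • v with hwv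
  have hw : Q *ᵥ wv = (fun j => (t • x + (1 - t) • y) j - a0 j) := by
    funext j
    rw [hwv, Matrix.mulVec_add, Matrix.mulVec_smul, Matrix.mulVec_smul, hu, hv]
    have hxy : (t • x + (1 - t) • y) j = t * x j + (1 - t) * y j := by
      simp [PiLp.add_apply, PiLp.smul_apply, smul_eq_mul]
    simp only [Pi.add_apply, Pi.smul_apply, smul_eq_mul, hxy]
    ring
  beta_reduce
  rw [heval _ _ hw, heval _ _ hu, heval _ _ hv, EReal.toReal_coe, EReal.toReal_coe,
    EReal.coe_le_coe_iff]
  -- quadratic form abbreviations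
  set qa : ℝ := u ⬝ᵥ (Q *ᵥ u) with hqa
  set qb : ℝ := v ⬝ᵥ (Q *ᵥ v) with hqb
  set qc : ℝ := u ⬝ᵥ (Q *ᵥ v) with hqc
  have hsym : v ⬝ᵥ (Q *ᵥ u) = qc := scq_symdot Q hQ v u
  have hwexp : wv ⬝ᵥ (Q *ᵥ wv) = t * t * qa + 2 * (t * (1 - t)) * qc + (1 - t) * (1 - t) * qb := by
    rw [hwv, Matrix.mulVec_add, Matrix.mulVec_smul, Matrix.mulVec_smul,
      add_dotProduct, smul_dotProduct, smul_dotProduct,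
      dotProduct_add, dotProduct_add, dotProduct_smul,
      dotProduct_smul, dotProduct_smul, dotProduct_smul,
      hsym]
    simp only [smul_eq_mul]
    ring
  have hDexp : (v - u) ⬝ᵥ (Q *ᵥ (v - u)) = qb - 2 * qc + qa := by
    rw [Matrix.mulVec_sub, sub_dotProduct, dotProduct_sub,
      dotProduct_sub, hsym]
    ring
  have hD0 : 0 ≤ (v - u) ⬝ᵥ (Q *ᵥ (v - u)) := by
    have := hQ.dotProduct_mulVec_nonneg (v - u); rwa [star_trivial] at this
  have hnorm : ‖y - x‖ ^ 2 = (Q *ᵥ (v - u)) ⬝ᵥ (Q *ᵥ (v - u)) := by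
    rw [← real_inner_self_eq_norm_sq]
    rw [PiLp.inner_apply]
    rw [show (Q *ᵥ (v - u)) ⬝ᵥ (Q *ᵥ (v - u)) = ∑ j, (Q *ᵥ (v - u)) j * (Q *ᵥ (v - u)) j from rfl]
    apply Finset.sum_congr rfl
    intro j _
    have h1 : (Q *ᵥ (v - u)) j = y j - x j := by
      rw [Matrix.mulVec_sub]
      have h2 := congrFun hu j
      have h3 := congrFun hv j
      simp only [Pi.sub_apply, h2, h3]
      ring
    have h4 : (y - x) j = y j - x j := rfl
    simp only [RCLike.inner_apply, conj_trivial, h4, h1]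
  have hkey := scq_key_ineq Q hQ lamMax hle (v - u)
  have hfrac : (1 / lamMax) * ‖y - x‖ ^ 2 ≤ qb - 2 * qc + qa := by
    rw [hnorm, ← hDexp]
    rw [one_div, inv_mul_le_iff₀ hlampos]
    exact hkey
  have ht2 : 0 ≤ t * (1 - t) := mul_nonneg ht0 (by linarith)
  have hfinal := mul_nonneg ht2 (sub_nonneg.2 hfrac)
  rw [hwexp]
  nlinarith [hfinal]
end

section
/- Let Q₀ be an n × n nonzero positive semidefinite real matrix, a₀ ∈ Im(Q₀), b₀ ∈ ℝ, f(x) = ½ xᵀQ₀x + a₀ᵀx + b₀, let A be a q × n real matrix whose rows are linearly independent, and b ∈ ℝ^q. Then the dual function θ(λ) = inf_{x ∈ ℝⁿ} [ f(x) + λᵀ(Ax − b) ] is strongly concave on ℝ^q with constant of strong concavity λ_min(AAᵀ)/λ_max(Q₀) > 0 with respect to the Euclidean norm. In particular this holds even when Q₀ is not positive definite, i.e., when f is not strongly convex. -/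
open scoped Matrix
open Matrix

section helpers
variable {m : ℕ}

lemma inner_eq_dot (x y : EuclideanSpace ℝ (Fin m)) :
    (inner ℝ x y : ℝ) = (x : Fin m → ℝ) ⬝ᵥ (y : Fin m → ℝ) := by
  simp [PiLp.inner_apply, dotProduct, RCLike.inner_apply, mul_comm]

lemma herm_transpose_eq {M : Matrix (Fin m) (Fin m) ℝ} (hM : M.IsHermitian) : Mᵀ = M := by
  ext i j
  simpa [Matrix.conjTranspose_apply] using congrFun (congrFun hM i) j

lemma dot_mulVec_symm {M : Matrix (Fin m) (Fin m) ℝ} (hM : M.IsHermitian)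
    (x y : Fin m → ℝ) : (M *ᵥ x) ⬝ᵥ y = x ⬝ᵥ (M *ᵥ y) := by
  rw [Matrix.dotProduct_mulVec, ← Matrix.mulVec_transpose, herm_transpose_eq hM,
    dotProduct_comm]

lemma dot_eigen {M : Matrix (Fin m) (Fin m) ℝ} (hM : M.IsHermitian)
    (x : Fin m → ℝ) (j : Fin m) :
    hM.eigenvectorBasis j ⬝ᵥ (M *ᵥ x) =
      hM.eigenvalues j * (hM.eigenvectorBasis j ⬝ᵥ x) := by
  have h := hM.mulVec_eigenvectorBasis j
  calc (hM.eigenvectorBasis j : Fin m → ℝ) ⬝ᵥ (M *ᵥ x)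
      = (M *ᵥ ⇑(hM.eigenvectorBasis j)) ⬝ᵥ x := (dot_mulVec_symm hM _ x).symm
    _ = (hM.eigenvalues j • ⇑(hM.eigenvectorBasis j)) ⬝ᵥ x := by rw [h]
    _ = _ := by rw [smul_dotProduct]; rfl

lemma quadform_eigen_sum {M : Matrix (Fin m) (Fin m) ℝ} (hM : M.IsHermitian)
    (x : Fin m → ℝ) :
    x ⬝ᵥ (M *ᵥ x) = ∑ j, hM.eigenvalues j *
      (hM.eigenvectorBasis j ⬝ᵥ x) ^ 2 := by
  have h := (hM.eigenvectorBasis).sum_inner_mul_inner (WithLp.toLp 2 x)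
      (WithLp.toLp 2 (M *ᵥ x))
  rw [inner_eq_dot] at h
  simp only [WithLp.ofLp_toLp] at h
  rw [← h]
  refine Finset.sum_congr rfl fun j _ => ?_
  rw [inner_eq_dot, inner_eq_dot, dot_eigen hM x j, dotProduct_comm]
  ring

lemma dot_self_eigen_sum {M : Matrix (Fin m) (Fin m) ℝ} (hM : M.IsHermitian)
    (x : Fin m → ℝ) :
    x ⬝ᵥ x = ∑ j, (hM.eigenvectorBasis j ⬝ᵥ x) ^ 2 := by
  have h := (hM.eigenvectorBasis).sum_inner_mul_inner (WithLp.toLp 2 x)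
      (WithLp.toLp 2 x)
  rw [inner_eq_dot] at h
  simp only [WithLp.ofLp_toLp] at h
  rw [← h]
  refine Finset.sum_congr rfl fun j _ => ?_
  rw [inner_eq_dot, inner_eq_dot, dotProduct_comm]
  ring

end helpers

section keys
variable {m : ℕ}

/-- `‖Mx‖² ≤ lamMax ⟨x, Mx⟩` for PSD `M` with eigenvalues at most `lamMax`. -/
lemma sq_mulVec_le {M : Matrix (Fin m) (Fin m) ℝ} (hM : M.PosSemidef) {lamMax : ℝ}
    (hle : ∀ i, hM.1.eigenvalues i ≤ lamMax) (x : Fin m → ℝ) :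
    (M *ᵥ x) ⬝ᵥ (M *ᵥ x) ≤ lamMax * (x ⬝ᵥ (M *ᵥ x)) := by
  rw [dot_self_eigen_sum hM.1 (M *ᵥ x), quadform_eigen_sum hM.1 x, Finset.mul_sum]
  refine Finset.sum_le_sum fun j _ => ?_
  rw [dot_eigen hM.1 x j]
  have h0 := hM.eigenvalues_nonneg j
  have h1 := hle j
  have hc := mul_nonneg (mul_nonneg (sub_nonneg.2 h1) h0)
    (sq_nonneg (hM.1.eigenvectorBasis j ⬝ᵥ x))
  nlinarith [hc]

/-- `lamMin ‖x‖² ≤ ⟨x, Mx⟩` for Hermitian `M` with eigenvalues at least `lamMin`. -/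
lemma lamMin_dot_le {M : Matrix (Fin m) (Fin m) ℝ} (hM : M.IsHermitian) {lamMin : ℝ}
    (hle : ∀ i, lamMin ≤ hM.eigenvalues i) (x : Fin m → ℝ) :
    lamMin * (x ⬝ᵥ x) ≤ x ⬝ᵥ (M *ᵥ x) := by
  rw [dot_self_eigen_sum hM x, quadform_eigen_sum hM x, Finset.mul_sum]
  refine Finset.sum_le_sum fun j _ => ?_
  exact mul_le_mul_of_nonneg_right (hle j) (sq_nonneg _)

/-- lower bound for a convex quadratic whose gradient vanishes at `-u`. -/
lemma quad_lower {M : Matrix (Fin m) (Fin m) ℝ} (hM : M.PosSemidef) (u x : Fin m → ℝ) :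
    -(1/2) * (u ⬝ᵥ (M *ᵥ u)) ≤ 1/2 * (x ⬝ᵥ (M *ᵥ x)) + (M *ᵥ u) ⬝ᵥ x := by
  have h := hM.dotProduct_mulVec_nonneg (x + u)
  rw [star_trivial] at h
  rw [Matrix.mulVec_add, add_dotProduct, dotProduct_add,
    dotProduct_add] at h
  have hs : (M *ᵥ u) ⬝ᵥ x = x ⬝ᵥ (M *ᵥ u) := dotProduct_comm _ _
  have hs2 : u ⬝ᵥ (M *ᵥ x) = x ⬝ᵥ (M *ᵥ u) := by
    rw [← dot_mulVec_symm hM.1, dotProduct_comm]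
  linarith

/-- bilinear symmetry -/
lemma dot_bilin_symm {M : Matrix (Fin m) (Fin m) ℝ} (hM : M.IsHermitian) (u v : Fin m → ℝ) :
    u ⬝ᵥ (M *ᵥ v) = v ⬝ᵥ (M *ᵥ u) := by
  rw [← dot_mulVec_symm hM, dotProduct_comm]

end keys

section range
variable {m : ℕ} (M : Matrix (Fin m) (Fin m) ℝ)

/-- range of `mulVec M` as a submodule of Euclidean space -/
def rangeSub : Submodule ℝ (EuclideanSpace ℝ (Fin m)) where
  carrier := {x | ∃ u : Fin m → ℝ, M *ᵥ u = x}
  add_mem' := by rintro a b ⟨u, hu⟩ ⟨v, hv⟩; exact ⟨u + v, by rw [Matrix.mulVec_add, hu, hv]; rfl⟩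
  zero_mem' := ⟨0, Matrix.mulVec_zero M⟩
  smul_mem' := by rintro c a ⟨u, hu⟩; exact ⟨c • u, by rw [Matrix.mulVec_smul, hu]; rfl⟩

lemma dot_self_nonneg' (v : Fin m → ℝ) : 0 ≤ v ⬝ᵥ v :=
  Finset.sum_nonneg fun i _ => mul_self_nonneg _

lemma orth_mulVec_eq_zero {M : Matrix (Fin m) (Fin m) ℝ} (hM : M.IsHermitian)
    {w : EuclideanSpace ℝ (Fin m)} (hw : w ∈ (rangeSub M)ᗮ) : M *ᵥ w = 0 := by
  have h : ∀ u : Fin m → ℝ, u ⬝ᵥ (M *ᵥ (w : Fin m → ℝ)) = 0 := by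
    intro u
    have h1 := hw (WithLp.toLp 2 (M *ᵥ u)) ⟨u, rfl⟩
    rw [inner_eq_dot] at h1
    rw [← dot_mulVec_symm hM]
    exact h1
  exact dotProduct_self_eq_zero.mp (h (M *ᵥ (w : Fin m → ℝ)))

/-- if `c` is not in the range, there is `w` with `Mw = 0` and `c ⬝ᵥ w > 0`. -/
lemma exists_descent {M : Matrix (Fin m) (Fin m) ℝ} (hM : M.IsHermitian)
    {c : Fin m → ℝ} (hc : ¬ ∃ u : Fin m → ℝ, M *ᵥ u = c) :
    ∃ w : Fin m → ℝ, M *ᵥ w = 0 ∧ 0 < c ⬝ᵥ w := by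
  obtain ⟨y, hy, z, hz, hsum⟩ := (rangeSub M).exists_add_mem_mem_orthogonal
    (WithLp.toLp 2 c)
  refine ⟨z, orth_mulVec_eq_zero hM hz, ?_⟩
  have hzne : (z : Fin m → ℝ) ≠ 0 := by
    intro h0
    apply hc
    obtain ⟨u, hu⟩ := hy
    refine ⟨u, ?_⟩
    have hcy : WithLp.toLp 2 c = y := by
      rw [hsum]
      have hz0 : z = 0 := by rw [← WithLp.toLp_ofLp 2 z, h0]; rfl
      simp [hz0]
    rw [hu, ← hcy]
  have hyz : (y : Fin m → ℝ) ⬝ᵥ (z : Fin m → ℝ) = 0 := by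
    have h0 : (inner ℝ (y : EuclideanSpace ℝ (Fin m)) z : ℝ) = 0 :=
      Submodule.inner_right_of_mem_orthogonal hy hz
    rw [inner_eq_dot] at h0
    exact h0
  have hcz : c ⬝ᵥ (z : Fin m → ℝ) = (z : Fin m → ℝ) ⬝ᵥ (z : Fin m → ℝ) := by
    have h2 : c ⬝ᵥ (z : Fin m → ℝ) = ((y + z : EuclideanSpace ℝ (Fin m)) : Fin m → ℝ) ⬝ᵥ (z : Fin m → ℝ) := by
      rw [← hsum]
    rw [h2]
    have h3 : ((y + z : EuclideanSpace ℝ (Fin m)) : Fin m → ℝ) ⬝ᵥ (z : Fin m → ℝ)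
        = (y : Fin m → ℝ) ⬝ᵥ z + (z : Fin m → ℝ) ⬝ᵥ z := add_dotProduct _ _ _
    rw [h3, hyz, zero_add]
  rw [hcz]
  exact lt_of_le_of_ne (dot_self_nonneg' _)
    (fun h => hzne (dotProduct_self_eq_zero.mp h.symm))

end range

section positivity
variable {m q' : ℕ}

lemma exists_pos_eigenvalue {M : Matrix (Fin m) (Fin m) ℝ} (hM : M.PosSemidef)
    (hM0 : M ≠ 0) : ∃ i, 0 < hM.1.eigenvalues i := by
  by_contra h
  push_neg at h
  have heig : hM.1.eigenvalues = 0 := by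
    funext i
    exact le_antisymm (h i) (hM.eigenvalues_nonneg i)
  apply hM0
  have hst := hM.1.spectral_theorem
  rw [heig] at hst
  rw [hst]
  have hd : Matrix.diagonal (RCLike.ofReal ∘ (0 : Fin m → ℝ)) = (0 : Matrix (Fin m) (Fin m) ℝ) := by
    ext i j
    simp [Matrix.diagonal]
  rw [hd, map_zero]

lemma posDef_AAT {A : Matrix (Fin q') (Fin m) ℝ} (hA : LinearIndependent ℝ A) :
    (A * Aᵀ).PosDef := by
  refine Matrix.PosDef.of_dotProduct_mulVec_pos (Matrix.isHermitian_mul_conjTranspose_self A) fun x hx => ?_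
  rw [star_trivial]
  have h1 : x ⬝ᵥ ((A * Aᵀ) *ᵥ x) = (Aᵀ *ᵥ x) ⬝ᵥ (Aᵀ *ᵥ x) := by
    rw [← Matrix.mulVec_mulVec, Matrix.dotProduct_mulVec, Matrix.mulVec_transpose]
  rw [h1]
  have hne : Aᵀ *ᵥ x ≠ 0 := by
    intro h0
    apply hx
    rw [Matrix.mulVec_transpose] at h0
    have hinj : Function.Injective A.vecMul := Matrix.vecMul_injective_iff.mpr hA
    exact hinj (a₂ := 0) (by show x ᵥ* A = 0 ᵥ* A; rw [h0, Matrix.zero_vecMul])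
  exact lt_of_le_of_ne (dot_self_nonneg' _)
    (fun h => hne (dotProduct_self_eq_zero.mp h.symm))

end positivity



/-- The smallest eigenvalue of a Hermitian real matrix. -/
noncomputable def lambdaMin {q : ℕ} (M : Matrix (Fin q) (Fin q) ℝ)
    (hM : M.IsHermitian) : ℝ := ⨅ i, hM.eigenvalues i

set_option maxHeartbeats 2000000 in
/-- For a convex quadratic `f(x) = ½xᵀQ₀x + a₀ᵀx + b₀` with `Q₀ ≠ 0`
positive semidefinite (possibly not definite), `a₀ ∈ Im(Q₀)`, and `A` with linearly
independent rows, the dual function `θ(λ) = inf_x [f(x) + λᵀ(Ax − b)]` is strongly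
concave on `ℝ^q` with constant `λ_min(AAᵀ)/λ_max(Q₀) > 0` (Euclidean norm). -/
theorem dual_function_of_quadratic_strongly_concave
    {n q : ℕ} (hq : 0 < q)
    (Q : Matrix (Fin n) (Fin n) ℝ)
    (hQ : Q.PosSemidef) (hQ0 : Q ≠ 0)
    (a0 : Fin n → ℝ) (ha0 : ∃ u : Fin n → ℝ, Q.mulVec u = a0) (b0 : ℝ)
    (f : EuclideanSpace ℝ (Fin n) → ℝ)
    (hf : f = fun x : EuclideanSpace ℝ (Fin n) => (1 / 2) * (∑ i, x i * Q.mulVec x i) + (∑ i, a0 i * x i) + b0)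
    (A : Matrix (Fin q) (Fin n) ℝ)
    (hA : LinearIndependent ℝ A)
    (b : EuclideanSpace ℝ (Fin q))
    (θ : EuclideanSpace ℝ (Fin q) → EReal)
    (hθ : θ = fun lam => ⨅ x : EuclideanSpace ℝ (Fin n),
      ((f x + ∑ i, lam i * (A.mulVec x i - b i) : ℝ) : EReal))
    (lamMax : ℝ) (hlamMax : lamMax = ⨆ i, hQ.1.eigenvalues i) :
    0 < lambdaMin (A * Aᵀ) (Matrix.isHermitian_mul_conjTranspose_self A) / lamMax ∧
    (∀ l1 l2 : EuclideanSpace ℝ (Fin q), ∀ r1 r2 : ℝ,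
      θ l1 = (r1 : EReal) → θ l2 = (r2 : EReal) →
      ∀ t : ℝ, 0 ≤ t → t ≤ 1 →
      ((t * r1 + (1 - t) * r2
        + (lambdaMin (A * Aᵀ) (Matrix.isHermitian_mul_conjTranspose_self A) / lamMax)
          * (t * (1 - t)) / 2 * ‖l1 - l2‖ ^ 2 : ℝ) : EReal)
        ≤ θ (t • l1 + (1 - t) • l2)) := by
  haveI : Nonempty (Fin q) := ⟨⟨0, hq⟩⟩
  set lamMin := lambdaMin (A * Aᵀ) (Matrix.isHermitian_mul_conjTranspose_self A) with hlamMin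
  -- positivity of the two constants
  have hpd := posDef_AAT hA
  have hminpos : 0 < lamMin := by
    obtain ⟨i0, hi0⟩ := exists_eq_ciInf_of_finite
      (f := (Matrix.isHermitian_mul_conjTranspose_self A).eigenvalues)
    rw [hlamMin]
    unfold lambdaMin
    exact lt_of_lt_of_eq (hpd.eigenvalues_pos i0) hi0
  have hmaxpos : 0 < lamMax := by
    obtain ⟨i, hi⟩ := exists_pos_eigenvalue hQ hQ0
    rw [hlamMax]
    exact lt_of_lt_of_le hi (le_ciSup (Set.finite_range _).bddAbove i)
  refine ⟨div_pos hminpos hmaxpos, ?_⟩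
  intro l1 l2 r1 r2 h1 h2 t ht0 ht1
  -- rewriting the objective
  have hobj : ∀ (lam : EuclideanSpace ℝ (Fin q)) (x : EuclideanSpace ℝ (Fin n)),
      f x + ∑ i, lam i * (A.mulVec x i - b i)
      = 1/2 * ((x : Fin n → ℝ) ⬝ᵥ (Q *ᵥ (x : Fin n → ℝ)))
        + (a0 + Aᵀ *ᵥ (lam : Fin q → ℝ)) ⬝ᵥ (x : Fin n → ℝ)
        + (b0 - (lam : Fin q → ℝ) ⬝ᵥ (b : Fin q → ℝ)) := by
    intro lam x
    rw [hf]
    have e1 : ∑ i, lam i * (A.mulVec x i - b i)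
        = (lam : Fin q → ℝ) ⬝ᵥ (A *ᵥ (x : Fin n → ℝ)) - (lam : Fin q → ℝ) ⬝ᵥ (b : Fin q → ℝ) := by
      simp [dotProduct, mul_sub, Finset.sum_sub_distrib]
    have e2 : (lam : Fin q → ℝ) ⬝ᵥ (A *ᵥ (x : Fin n → ℝ)) = (Aᵀ *ᵥ (lam : Fin q → ℝ)) ⬝ᵥ (x : Fin n → ℝ) := by
      rw [Matrix.dotProduct_mulVec, Matrix.mulVec_transpose]
    have e3 : ∑ i, a0 i * x i = a0 ⬝ᵥ (x : Fin n → ℝ) := rfl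
    have e4 : ∑ i, x i * Q.mulVec x i = (x : Fin n → ℝ) ⬝ᵥ (Q *ᵥ (x : Fin n → ℝ)) := rfl
    rw [e1, e2, add_dotProduct]
    dsimp only
    rw [e3, e4]
    ring
  -- the value of the dual function at a point where the linear term is in the range
  have hval : ∀ (lam : EuclideanSpace ℝ (Fin q)) (u : Fin n → ℝ),
      Q *ᵥ u = a0 + Aᵀ *ᵥ (lam : Fin q → ℝ) →
      θ lam = (((b0 - (lam : Fin q → ℝ) ⬝ᵥ (b : Fin q → ℝ)) - 1/2 * (u ⬝ᵥ (Q *ᵥ u)) : ℝ) : EReal) := by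
    intro lam u hu
    rw [hθ]
    apply le_antisymm
    · refine iInf_le_of_le (WithLp.toLp 2 (-u)) (le_of_eq ?_)
      rw [hobj lam _]
      norm_cast
      have e5 : ((WithLp.toLp 2 (-u)) : Fin n → ℝ) = -u := rfl
      rw [e5, ← hu]
      have e6 : (-u) ⬝ᵥ (Q *ᵥ (-u)) = u ⬝ᵥ (Q *ᵥ u) := by
        rw [Matrix.mulVec_neg, dotProduct_neg, neg_dotProduct, neg_neg]
      have e7 : (Q *ᵥ u) ⬝ᵥ (-u) = -(u ⬝ᵥ (Q *ᵥ u)) := by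
        rw [dotProduct_neg, dotProduct_comm]
      rw [e6, e7]
      ring
    · refine le_iInf fun x => ?_
      rw [hobj lam x, EReal.coe_le_coe_iff]
      have hql := quad_lower hQ u (x : Fin n → ℝ)
      rw [← hu]
      linarith
  -- finiteness forces membership in the range
  have hmem : ∀ (lam : EuclideanSpace ℝ (Fin q)) (r : ℝ), θ lam = (r : EReal) →
      ∃ u : Fin n → ℝ, Q *ᵥ u = a0 + Aᵀ *ᵥ (lam : Fin q → ℝ) := by
    intro lam r hr
    by_contra hcon
    obtain ⟨w, hw0, hwpos⟩ := exists_descent hQ.1 hcon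
    set c : Fin n → ℝ := a0 + Aᵀ *ᵥ (lam : Fin q → ℝ) with hc
    set s : ℝ := ((b0 - (lam : Fin q → ℝ) ⬝ᵥ (b : Fin q → ℝ)) - r + 1) / (c ⬝ᵥ w) with hs
    have hle : θ lam ≤ ((r - 1 : ℝ) : EReal) := by
      rw [hθ]
      refine iInf_le_of_le (WithLp.toLp 2 (-(s • w))) (le_of_eq ?_)
      rw [hobj lam _]
      norm_cast
      have e5 : ((WithLp.toLp 2 (-(s • w))) : Fin n → ℝ) = -(s • w) := rfl
      rw [e5]
      have e6 : (-(s • w)) ⬝ᵥ (Q *ᵥ (-(s • w))) = 0 := by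
        rw [Matrix.mulVec_neg, Matrix.mulVec_smul, hw0, smul_zero, neg_zero,
          dotProduct_zero]
      have e7 : (a0 + Aᵀ *ᵥ (lam : Fin q → ℝ)) ⬝ᵥ (-(s • w)) = -(s * (c ⬝ᵥ w)) := by
        rw [← hc, dotProduct_neg, dotProduct_smul, smul_eq_mul]
      have hcw : c ⬝ᵥ w ≠ 0 := ne_of_gt hwpos
      have e8 : s * (c ⬝ᵥ w) = (b0 - (lam : Fin q → ℝ) ⬝ᵥ (b : Fin q → ℝ)) - r + 1 := by
        rw [hs, div_mul_cancel₀ _ hcw]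
      rw [e6, e7, e8]
      ring
    rw [hr] at hle
    rw [EReal.coe_le_coe_iff] at hle
    linarith
  obtain ⟨u1, hu1⟩ := hmem l1 r1 h1
  obtain ⟨u2, hu2⟩ := hmem l2 r2 h2
  set ut : Fin n → ℝ := t • u1 + (1 - t) • u2 with hut
  set lt : EuclideanSpace ℝ (Fin q) := t • l1 + (1 - t) • l2 with hlt
  have hltfun : (lt : Fin q → ℝ) = t • (l1 : Fin q → ℝ) + (1 - t) • (l2 : Fin q → ℝ) := rfl
  have hlc : Q *ᵥ ut = a0 + Aᵀ *ᵥ (lt : Fin q → ℝ) := by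
    rw [hut, Matrix.mulVec_add, Matrix.mulVec_smul, Matrix.mulVec_smul, hu1, hu2,
      hltfun, Matrix.mulVec_add, Matrix.mulVec_smul, Matrix.mulVec_smul]
    funext i
    simp only [Pi.add_apply, Pi.smul_apply, smul_eq_mul]
    ring
  -- real values
  have hr1 : r1 = (b0 - (l1 : Fin q → ℝ) ⬝ᵥ (b : Fin q → ℝ)) - 1/2 * (u1 ⬝ᵥ (Q *ᵥ u1)) :=
    EReal.coe_eq_coe_iff.mp (h1.symm.trans (hval l1 u1 hu1))
  have hr2 : r2 = (b0 - (l2 : Fin q → ℝ) ⬝ᵥ (b : Fin q → ℝ)) - 1/2 * (u2 ⬝ᵥ (Q *ᵥ u2)) :=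
    EReal.coe_eq_coe_iff.mp (h2.symm.trans (hval l2 u2 hu2))
  rw [hval lt ut hlc, EReal.coe_le_coe_iff]
  -- notation for quadratic quantities
  set S1 := u1 ⬝ᵥ (Q *ᵥ u1) with hS1
  set S2 := u2 ⬝ᵥ (Q *ᵥ u2) with hS2
  set S12 := u1 ⬝ᵥ (Q *ᵥ u2) with hS12
  have hsym12 : u2 ⬝ᵥ (Q *ᵥ u1) = S12 := dot_bilin_symm hQ.1 u2 u1
  have hexp : ut ⬝ᵥ (Q *ᵥ ut)
      = t^2 * S1 + 2*t*(1-t)*S12 + (1-t)^2 * S2 := by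
    rw [hut, Matrix.mulVec_add, Matrix.mulVec_smul, Matrix.mulVec_smul,
      add_dotProduct, smul_dotProduct, smul_dotProduct,
      dotProduct_add, dotProduct_add,
      dotProduct_smul, dotProduct_smul, dotProduct_smul,
      dotProduct_smul, hsym12]
    simp only [smul_eq_mul, ← hS1, ← hS2, ← hS12]
    ring
  set δ : Fin n → ℝ := u1 - u2 with hδdef
  have hδexp : δ ⬝ᵥ (Q *ᵥ δ) = S1 - 2*S12 + S2 := by
    rw [hδdef, Matrix.mulVec_sub, sub_dotProduct, dotProduct_sub,
      dotProduct_sub, hsym12]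
    ring
  -- the key eigenvalue estimate
  set μ : Fin q → ℝ := (l1 : Fin q → ℝ) - (l2 : Fin q → ℝ) with hμdef
  have hQδ : Q *ᵥ δ = Aᵀ *ᵥ μ := by
    rw [hδdef, Matrix.mulVec_sub, hu1, hu2, hμdef, Matrix.mulVec_sub]
    funext i
    simp only [Pi.add_apply, Pi.sub_apply]
    ring
  have hchain1 : lamMin * (μ ⬝ᵥ μ) ≤ μ ⬝ᵥ ((A * Aᵀ) *ᵥ μ) := by
    refine lamMin_dot_le (Matrix.isHermitian_mul_conjTranspose_self A) (fun i => ?_) μ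
    exact ciInf_le (Set.finite_range _).bddBelow i
  have hc2 : μ ⬝ᵥ ((A * Aᵀ) *ᵥ μ) = (Aᵀ *ᵥ μ) ⬝ᵥ (Aᵀ *ᵥ μ) := by
    rw [← Matrix.mulVec_mulVec, Matrix.dotProduct_mulVec, Matrix.mulVec_transpose]
  have hc4 : (Q *ᵥ δ) ⬝ᵥ (Q *ᵥ δ) ≤ lamMax * (δ ⬝ᵥ (Q *ᵥ δ)) := by
    refine sq_mulVec_le hQ (fun i => ?_) δ
    rw [hlamMax]
    exact le_ciSup (Set.finite_range _).bddAbove i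
  have hnorm : ‖l1 - l2‖ ^ 2 = μ ⬝ᵥ μ := by
    rw [← real_inner_self_eq_norm_sq, inner_eq_dot]
    rfl
  have hB : lamMin / lamMax * (‖l1 - l2‖ ^ 2) ≤ δ ⬝ᵥ (Q *ᵥ δ) := by
    rw [hnorm, div_mul_eq_mul_div, div_le_iff₀ hmaxpos]
    calc lamMin * (μ ⬝ᵥ μ) ≤ μ ⬝ᵥ ((A * Aᵀ) *ᵥ μ) := hchain1
      _ = (Q *ᵥ δ) ⬝ᵥ (Q *ᵥ δ) := by rw [hc2, hQδ]
      _ ≤ lamMax * (δ ⬝ᵥ (Q *ᵥ δ)) := hc4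
      _ = (δ ⬝ᵥ (Q *ᵥ δ)) * lamMax := mul_comm _ _
  -- final arithmetic
  have hltb : (lt : Fin q → ℝ) ⬝ᵥ (b : Fin q → ℝ)
      = t * ((l1 : Fin q → ℝ) ⬝ᵥ (b : Fin q → ℝ)) + (1-t) * ((l2 : Fin q → ℝ) ⬝ᵥ (b : Fin q → ℝ)) := by
    rw [hltfun, add_dotProduct, smul_dotProduct, smul_dotProduct]
    simp [smul_eq_mul]
  have htt : 0 ≤ t * (1 - t) := mul_nonneg ht0 (by linarith)
  have key : lamMin / lamMax * (t * (1 - t)) / 2 * (‖l1 - l2‖ ^ 2)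
      ≤ t * (1 - t) / 2 * (δ ⬝ᵥ (Q *ᵥ δ)) := by
    have h := mul_le_mul_of_nonneg_left hB htt
    nlinarith [h]
  rw [hr1, hr2, hexp, hltb]
  rw [hδexp] at key
  nlinarith [key]
end

section
/- Let f(x) = Σ_{k=1}^M α_k f_k(x) where α_k > 0 and each f_k : ℝⁿ → ℝ is convex and differentiable with ∇f_k Lipschitz continuous with constant L_k > 0 for the Euclidean norm on ℝⁿ. Let A be a q × n real matrix whose rows are linearly independent, and b ∈ ℝ^q. Then the dual function θ(λ) = inf_{x ∈ ℝⁿ} [ f(x) + λᵀ(Ax − b) ] is strongly concave on ℝ^q with constant of strong concavity λ_min(AAᵀ)/(Σ_{k=1}^M α_k L_k) with respect to the Euclidean norm. -/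
open scoped Matrix

open scoped RealInnerProductSpace in
private lemma descent_lemma' {E : Type*} [NormedAddCommGroup E] [InnerProductSpace ℝ E]
    [CompleteSpace E] {g : E → ℝ} {G : E → E} {L : ℝ} (hL : 0 ≤ L)
    (hg : ∀ y, HasGradientAt g (G y) y)
    (hlip : ∀ x y, ‖G y - G x‖ ≤ L * ‖y - x‖) (x d : E) :
    g (x + d) ≤ g x + ⟪G x, d⟫ + L / 2 * ‖d‖ ^ 2 := by
  have hGcont : Continuous G := by
    have h : LipschitzWith (Real.toNNReal L) G := by
      rw [lipschitzWith_iff_norm_sub_le]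
      intro a b
      calc ‖G a - G b‖ ≤ L * ‖a - b‖ := hlip b a
        _ = _ := by rw [Real.coe_toNNReal L hL]
    exact h.continuous
  set φ' : ℝ → ℝ := fun s => ⟪G (x + s • d), d⟫ with hφ'
  have hderiv : ∀ s : ℝ, HasDerivAt (fun s : ℝ => g (x + s • d)) (φ' s) s := by
    intro s
    have h1 : HasDerivAt (fun s : ℝ => x + s • d) d s := by
      simpa using ((hasDerivAt_id s).smul_const d).const_add x
    have h2 := (hg (x + s • d)).hasFDerivAt.comp_hasDerivAt s h1
    simpa [hφ', Function.comp_def] using h2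
  have hcont : Continuous φ' := by
    apply Continuous.inner
    · exact hGcont.comp (by continuity)
    · exact continuous_const
  have hint : IntervalIntegrable φ' MeasureTheory.volume 0 1 := hcont.intervalIntegrable _ _
  have heq : ∫ s in (0:ℝ)..1, φ' s = g (x + d) - g x := by
    have h := intervalIntegral.integral_eq_sub_of_hasDerivAt (f := fun s : ℝ => g (x + s • d))
      (f' := φ') (fun s _ => hderiv s) hint
    simpa using h
  have hb : ∀ s ∈ Set.Icc (0:ℝ) 1, φ' s ≤ ⟪G x, d⟫ + s * (L * ‖d‖ ^ 2) := by
    intro s hs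
    have h3 : φ' s - ⟪G x, d⟫ = ⟪G (x + s • d) - G x, d⟫ := by
      rw [inner_sub_left]
    have h4 : ⟪G (x + s • d) - G x, d⟫ ≤ ‖G (x + s • d) - G x‖ * ‖d‖ :=
      real_inner_le_norm _ _
    have h5 : ‖G (x + s • d) - G x‖ ≤ L * (s * ‖d‖) := by
      have h6 := hlip x (x + s • d)
      simpa [norm_smul, abs_of_nonneg hs.1] using h6
    nlinarith [norm_nonneg d, hs.1]
  have hI : (∫ s in (0:ℝ)..1, φ' s) ≤ ∫ s in (0:ℝ)..1, (⟪G x, d⟫ + s * (L * ‖d‖ ^ 2)) := by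
    apply intervalIntegral.integral_mono_on (by norm_num) hint ?_ hb
    exact (by continuity : Continuous fun s : ℝ => ⟪G x, d⟫ + s * (L * ‖d‖ ^ 2)).intervalIntegrable _ _
  have hval : (∫ s in (0:ℝ)..1, (⟪G x, d⟫ + s * (L * ‖d‖ ^ 2))) = ⟪G x, d⟫ + L / 2 * ‖d‖ ^ 2 := by
    rw [intervalIntegral.integral_add intervalIntegrable_const
      ((by continuity : Continuous fun s : ℝ => s * (L * ‖d‖ ^ 2)).intervalIntegrable _ _),
      intervalIntegral.integral_mul_const, integral_id]
    simp
    ring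
  rw [heq] at hI
  rw [hval] at hI
  linarith

open scoped RealInnerProductSpace in
private lemma inner_eq_sum' {m : ℕ} (x y : EuclideanSpace ℝ (Fin m)) :
    ⟪x, y⟫ = ∑ i, x i * y i := by
  simp [PiLp.inner_apply, RCLike.inner_apply, conj_trivial]
  exact Finset.sum_congr rfl fun _ _ => mul_comm _ _

open scoped RealInnerProductSpace in
private lemma rayleigh_min' {q : ℕ} (Mm : Matrix (Fin q) (Fin q) ℝ) (hM : Mm.IsHermitian)
    (u : EuclideanSpace ℝ (Fin q)) :
    lambdaMin Mm hM * ‖u‖ ^ 2 ≤ ∑ j, Mm.mulVec u j * u j := by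
  set b := hM.eigenvectorBasis with hb
  set lam := hM.eigenvalues with hlam
  set w : EuclideanSpace ℝ (Fin q) := (WithLp.toLp 2 (Mm.mulVec u) : EuclideanSpace ℝ (Fin q)) with hw
  have hMt : Mmᵀ = Mm := by
    rw [← Matrix.conjTranspose_eq_transpose_of_trivial]; exact hM.eq
  have hwb : ∀ i, ⟪w, b i⟫ = lam i * ⟪b i, u⟫ := by
    intro i
    have h1 : ⟪w, b i⟫ = (Mm.mulVec u) ⬝ᵥ ⇑(b i) := inner_eq_sum' _ _
    have h2 : (Mm.mulVec u) ⬝ᵥ ⇑(b i) = ⇑(b i) ⬝ᵥ Mm.mulVec u := dotProduct_comm _ _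
    have h3 : ⇑(b i) ⬝ᵥ Mm.mulVec u = (Mm.mulVec ⇑(b i)) ⬝ᵥ u := by
      rw [Matrix.dotProduct_mulVec, ← Matrix.mulVec_transpose, hMt]
    rw [h1, h2, h3, hM.mulVec_eigenvectorBasis]
    have h4 : ((lam i • ⇑(b i)) ⬝ᵥ u) = lam i * (⇑(b i) ⬝ᵥ u) := by
      simp [smul_dotProduct]
    rw [h4]
    congr 1
    exact (inner_eq_sum' _ _).symm
  have hsum : ⟪w, u⟫ = ∑ i, lam i * ⟪b i, u⟫ ^ 2 := by
    rw [← b.sum_inner_mul_inner w u]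
    exact Finset.sum_congr rfl fun i _ => by rw [hwb i]; ring
  have hnorm : ‖u‖ ^ 2 = ∑ i, ⟪b i, u⟫ ^ 2 := by
    rw [← real_inner_self_eq_norm_sq, ← b.sum_inner_mul_inner u u]
    exact Finset.sum_congr rfl fun i _ => by rw [real_inner_comm u (b i)]; ring
  have hmin : ∀ i, lambdaMin Mm hM ≤ lam i := fun i =>
    ciInf_le (Set.finite_range _).bddBelow i
  have hle : lambdaMin Mm hM * ‖u‖ ^ 2 ≤ ⟪w, u⟫ := by
    rw [hsum, hnorm, Finset.mul_sum]
    exact Finset.sum_le_sum fun i _ => mul_le_mul_of_nonneg_right (hmin i) (sq_nonneg _)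
  calc lambdaMin Mm hM * ‖u‖ ^ 2 ≤ ⟪w, u⟫ := hle
    _ = _ := inner_eq_sum' _ _

private lemma mulVec_add_smul' {n q : ℕ} (A : Matrix (Fin q) (Fin n) ℝ)
    (x d : EuclideanSpace ℝ (Fin n)) (s : ℝ) (i : Fin q) :
    A.mulVec (x + s • d) i = A.mulVec x i + s * A.mulVec d i := by
  simp [Matrix.mulVec, dotProduct, PiLp.add_apply, PiLp.smul_apply, mul_add,
    Finset.sum_add_distrib, Finset.mul_sum, smul_eq_mul, mul_left_comm]

private lemma dot_transpose' {n q : ℕ} (A : Matrix (Fin q) (Fin n) ℝ)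
    (l : EuclideanSpace ℝ (Fin q)) (d : EuclideanSpace ℝ (Fin n)) :
    ∑ i, l i * A.mulVec d i = ∑ j, Aᵀ.mulVec l j * d j := by
  calc (∑ i, l i * A.mulVec d i) = (fun i => l i) ⬝ᵥ A.mulVec d := rfl
    _ = ((fun i => l i) ᵥ* A) ⬝ᵥ (fun j => d j) := Matrix.dotProduct_mulVec _ _ _
    _ = Aᵀ.mulVec l ⬝ᵥ (fun j => d j) := by rw [← Matrix.mulVec_transpose]
    _ = _ := rfl

private lemma combine_ineq' (t r1 r2 FX gd L nd S1 S2 T1 T2 : ℝ)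
    (ht0 : 0 ≤ t) (h1t : 0 ≤ 1 - t)
    (e1 : r1 ≤ FX + (1-t)*gd + L/2*((1-t)^2*nd) + (S1 + (1-t)*T1))
    (e2 : r2 ≤ FX + (-t)*gd + L/2*(t^2*nd) + (S2 + (-t)*T2)) :
    t*r1 + (1-t)*r2 ≤ FX + (t*S1 + (1-t)*S2) + (t*(1-t))*(L/2*nd + (T1 - T2)) := by
  nlinarith [mul_le_mul_of_nonneg_left e1 ht0, mul_le_mul_of_nonneg_left e2 h1t]

private lemma final_ineq' (P W Q X L Li NV : ℝ)
    (comb : P ≤ W + X * (L/2 * (Li^2 * NV) + -Li * NV))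
    (hq : Q ≤ X * (Li * NV - L/2 * (Li^2 * NV))) :
    P + Q ≤ W := by nlinarith [comb, hq]

/-- If `f = Σₖ αₖ fₖ` with `αₖ > 0` and each `fₖ` convex,
differentiable with `Lₖ`-Lipschitz gradient (`Lₖ > 0`), and `A` has linearly
independent rows, then the dual function is strongly concave on `ℝ^q` with
constant `λ_min(AAᵀ)/(Σₖ αₖLₖ)` (Euclidean norm). -/
theorem dual_function_of_sum_strongly_concave
    {n q M : ℕ}
    (a : Fin M → ℝ) (ha : ∀ k, 0 < a k)
    (fk : Fin M → EuclideanSpace ℝ (Fin n) → ℝ)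
    (fk' : Fin M → EuclideanSpace ℝ (Fin n) → EuclideanSpace ℝ (Fin n))
    (hconv : ∀ k, ConvexOn ℝ Set.univ (fk k))
    (hdiff : ∀ k x, HasGradientAt (fk k) (fk' k x) x)
    (Lk : Fin M → ℝ) (hLk : ∀ k, 0 < Lk k)
    (hLip : ∀ k x y, ‖fk' k y - fk' k x‖ ≤ Lk k * ‖y - x‖)
    (f : EuclideanSpace ℝ (Fin n) → ℝ)
    (hf : f = fun x => ∑ k, a k * fk k x)
    (A : Matrix (Fin q) (Fin n) ℝ)
    (hA : LinearIndependent ℝ A)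
    (b : EuclideanSpace ℝ (Fin q))
    (θ : EuclideanSpace ℝ (Fin q) → EReal)
    (hθ : θ = fun lam => ⨅ x : EuclideanSpace ℝ (Fin n),
      ((f x + ∑ i, lam i * (A.mulVec x i - b i) : ℝ) : EReal)) :
    ∀ l1 l2 : EuclideanSpace ℝ (Fin q), ∀ r1 r2 : ℝ,
      θ l1 = (r1 : EReal) → θ l2 = (r2 : EReal) →
      ∀ t : ℝ, 0 ≤ t → t ≤ 1 →
      ((t * r1 + (1 - t) * r2
        + (lambdaMin (A * Aᵀ) (Matrix.isHermitian_mul_conjTranspose_self A)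
            / (∑ k, a k * Lk k))
          * (t * (1 - t)) / 2 * ‖l1 - l2‖ ^ 2 : ℝ) : EReal)
        ≤ θ (t • l1 + (1 - t) • l2) := by
  intro l1 l2 r1 r2 h1 h2 t ht0 ht1
  have h1t : (0:ℝ) ≤ 1 - t := by linarith
  have hbound : ∀ (l : EuclideanSpace ℝ (Fin q)) (r : ℝ), θ l = (r : EReal) →
      ∀ y : EuclideanSpace ℝ (Fin n), r ≤ f y + ∑ i, l i * (A.mulVec y i - b i) := by
    intro l r hr y
    have hle : θ l ≤ ((f y + ∑ i, l i * (A.mulVec y i - b i) : ℝ) : EReal) := by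
      rw [hθ]; exact iInf_le _ y
    rw [hr] at hle
    exact_mod_cast hle
  rw [hθ]
  refine le_iInf fun x => ?_
  rw [EReal.coe_le_coe_iff]
  rcases Nat.eq_zero_or_pos M with hM0 | hMpos
  · -- degenerate case M = 0
    subst hM0
    have hf0 : ∀ y, f y = 0 := fun y => by rw [hf]; simp
    have key0 : ∀ (l : EuclideanSpace ℝ (Fin q)) (r : ℝ), θ l = (r : EReal) →
        l = 0 ∧ r = 0 := by
      intro l r hr
      have hv := hbound l r hr
      set w : EuclideanSpace ℝ (Fin n) := (WithLp.toLp 2 (Aᵀ.mulVec l) : EuclideanSpace ℝ (Fin n)) with hw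
      have hws : ∀ s : ℝ, r ≤ s * (∑ j, w j * w j) - ∑ i, l i * b i := by
        intro s
        have h := hv (s • w)
        have hlin : ∀ i, A.mulVec (s • w) i = s * A.mulVec w i := by
          intro i
          have h' := mulVec_add_smul' A 0 w s i
          simpa [Matrix.mulVec_zero] using h'
        have hsum : ∑ i, l i * (A.mulVec (s • w) i - b i)
            = s * (∑ i, l i * A.mulVec w i) - ∑ i, l i * b i := by
          simp only [hlin]
          rw [Finset.mul_sum, ← Finset.sum_sub_distrib]
          exact Finset.sum_congr rfl fun i _ => by ring
        have hdot : ∑ i, l i * A.mulVec w i = ∑ j, w j * w j := dot_transpose' A l w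
        rw [hf0, zero_add, WithLp.ofLp_smul, hsum, hdot] at h
        exact h
      have hNW0 : (∑ j, w j * w j) = 0 := by
        by_contra hne
        have hpos : 0 < ∑ j, w j * w j :=
          lt_of_le_of_ne (Finset.sum_nonneg fun j _ => mul_self_nonneg _) (Ne.symm hne)
        have h := hws ((r + (∑ i, l i * b i) - 1) / (∑ j, w j * w j))
        rw [div_mul_cancel₀ _ (ne_of_gt hpos)] at h
        linarith
      have hwj : ∀ j, w j = 0 := by
        intro j
        have h := (Finset.sum_eq_zero_iff_of_nonneg
          (fun j _ => mul_self_nonneg (w j))).mp hNW0 j (Finset.mem_univ j)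
        exact mul_self_eq_zero.mp h
      have hl0 : l = 0 := by
        have hli := Fintype.linearIndependent_iff.mp hA (fun i => l i) ?_
        · ext i
          exact hli i
        · funext j
          have h := hwj j
          simpa [hw, Matrix.mulVec, dotProduct, Matrix.transpose_apply,
            Finset.sum_apply, mul_comm] using h
      refine ⟨hl0, ?_⟩
      rw [hl0] at hr
      have hθ0 : θ 0 = ((0:ℝ) : EReal) := by
        rw [hθ]
        have hz : ∀ x : EuclideanSpace ℝ (Fin n),
            (f x + ∑ i, (0 : EuclideanSpace ℝ (Fin q)) i * (A.mulVec x i - b i) : ℝ) = 0 := by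
          intro x; simp [hf0]
        simp only [hz]
        exact iInf_const
      rw [hθ0] at hr
      exact_mod_cast hr.symm
    obtain ⟨hl1, hr1⟩ := key0 l1 r1 h1
    obtain ⟨hl2, hr2⟩ := key0 l2 r2 h2
    subst hr1; subst hr2
    rw [hl1, hl2]
    simp [hf0]
  · -- main case M > 0
    haveI : Nonempty (Fin M) := ⟨⟨0, hMpos⟩⟩
    set c := lambdaMin (A * Aᵀ) (Matrix.isHermitian_mul_conjTranspose_self A) with hc
    set L := ∑ k, a k * Lk k with hLdef
    have hL : 0 < L := Finset.sum_pos (fun k _ => mul_pos (ha k) (hLk k)) Finset.univ_nonempty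
    set G : EuclideanSpace ℝ (Fin n) → EuclideanSpace ℝ (Fin n) :=
      fun y => ∑ k, a k • fk' k y with hGdef
    have hG : ∀ y, HasGradientAt f (G y) y := by
      intro y
      rw [hf]
      have h : HasFDerivAt (fun z => ∑ k, a k * fk k z)
          (∑ k, a k • (InnerProductSpace.toDual ℝ _ (fk' k y))) y :=
        HasFDerivAt.fun_sum (fun k _ => ((hdiff k y).hasFDerivAt).const_mul (a k))
      rw [hasGradientAt_iff_hasFDerivAt]
      have heq : (InnerProductSpace.toDual ℝ (EuclideanSpace ℝ (Fin n))) (G y)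
          = ∑ k, a k • (InnerProductSpace.toDual ℝ _ (fk' k y)) := by
        rw [hGdef, map_sum]
        exact Finset.sum_congr rfl fun k _ => by rw [map_smul]
      rw [heq]; exact h
    have hGlip : ∀ z y, ‖G y - G z‖ ≤ L * ‖y - z‖ := by
      intro z y
      have h1 : G y - G z = ∑ k, a k • (fk' k y - fk' k z) := by
        rw [hGdef, ← Finset.sum_sub_distrib]
        exact Finset.sum_congr rfl fun k _ => (smul_sub _ _ _).symm
      rw [h1]
      calc ‖∑ k, a k • (fk' k y - fk' k z)‖ ≤ ∑ k, ‖a k • (fk' k y - fk' k z)‖ :=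
            norm_sum_le _ _
        _ ≤ ∑ k, a k * (Lk k * ‖y - z‖) := by
            apply Finset.sum_le_sum
            intro k _
            rw [norm_smul, Real.norm_eq_abs, abs_of_pos (ha k)]
            exact mul_le_mul_of_nonneg_left (hLip k z y) (ha k).le
        _ = L * ‖y - z‖ := by
            rw [hLdef, Finset.sum_mul]
            exact Finset.sum_congr rfl fun k _ => by ring
    set u : EuclideanSpace ℝ (Fin q) := l1 - l2 with hu
    set v : EuclideanSpace ℝ (Fin n) := (WithLp.toLp 2 (Aᵀ.mulVec u) : EuclideanSpace ℝ (Fin n)) with hv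
    set d : EuclideanSpace ℝ (Fin n) := (-(1/L)) • v with hd
    have hsv : ∑ j, v j * v j = ‖v‖ ^ 2 := by
      rw [← real_inner_self_eq_norm_sq, inner_eq_sum']
    have hray : c * ‖u‖ ^ 2 ≤ ‖v‖ ^ 2 := by
      have h0 := rayleigh_min' (A * Aᵀ) (Matrix.isHermitian_mul_conjTranspose_self A) u
      have h2 : (A * Aᵀ).mulVec u = A.mulVec v := by
        rw [← Matrix.mulVec_mulVec]
      have h1 : ∑ j, (A * Aᵀ).mulVec u j * u j = ∑ j, v j * v j := by
        rw [h2]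
        calc ∑ j, A.mulVec v j * u j = ∑ j, u j * A.mulVec v j :=
              Finset.sum_congr rfl fun j _ => mul_comm _ _
          _ = ∑ j, Aᵀ.mulVec u j * v j := dot_transpose' A u v
          _ = ∑ j, v j * v j := rfl
      rw [h1, hsv] at h0
      exact h0
    have hdd : ‖d‖ ^ 2 = (1/L) ^ 2 * ‖v‖ ^ 2 := by
      rw [hd, norm_smul, Real.norm_eq_abs, mul_pow, sq_abs]
      ring
    have hvd : ∑ j, v j * d j = -(1/L) * ‖v‖ ^ 2 := by
      have hdj : ∀ j, d j = -(1/L) * v j := fun j => by rw [hd]; simp [PiLp.smul_apply]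
      simp only [hdj]
      rw [← hsv, Finset.mul_sum]
      exact Finset.sum_congr rfl fun j _ => by ring
    -- pointwise bounds
    set x1 : EuclideanSpace ℝ (Fin n) := x + (1 - t) • d with hx1def
    set x2 : EuclideanSpace ℝ (Fin n) := x + (-t) • d with hx2def
    have hr1' := hbound l1 r1 h1 x1
    have hr2' := hbound l2 r2 h2 x2
    have hd1 : f x1 ≤ f x + (1 - t) * (inner ℝ (G x) d : ℝ) + L/2 * ((1-t)^2 * ‖d‖^2) := by
      have h := descent_lemma' hL.le hG hGlip x ((1 - t) • d)
      rwa [real_inner_smul_right, norm_smul, Real.norm_eq_abs, abs_of_nonneg h1t, mul_pow] at h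
    have hd2 : f x2 ≤ f x + (-t) * (inner ℝ (G x) d : ℝ) + L/2 * (t^2 * ‖d‖^2) := by
      have h := descent_lemma' hL.le hG hGlip x ((-t) • d)
      rwa [real_inner_smul_right, norm_smul, Real.norm_eq_abs, abs_neg, abs_of_nonneg ht0,
        mul_pow] at h
    -- linear expansions
    have hx1 : ∀ i, A.mulVec x1 i = A.mulVec x i + (1 - t) * A.mulVec d i :=
      mulVec_add_smul' A x d (1 - t)
    have hx2 : ∀ i, A.mulVec x2 i = A.mulVec x i + (-t) * A.mulVec d i :=
      mulVec_add_smul' A x d (-t)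
    have hs1 : ∑ i, l1 i * (A.mulVec x1 i - b i)
        = (∑ i, l1 i * (A.mulVec x i - b i)) + (1 - t) * ∑ i, l1 i * A.mulVec d i := by
      simp only [hx1]
      rw [Finset.mul_sum, ← Finset.sum_add_distrib]
      exact Finset.sum_congr rfl fun i _ => by ring
    have hs2 : ∑ i, l2 i * (A.mulVec x2 i - b i)
        = (∑ i, l2 i * (A.mulVec x i - b i)) + (-t) * ∑ i, l2 i * A.mulVec d i := by
      simp only [hx2]
      rw [Finset.mul_sum, ← Finset.sum_add_distrib]
      exact Finset.sum_congr rfl fun i _ => by ring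
    have hsc : ∑ i, (t • l1 + (1 - t) • l2) i * (A.mulVec x i - b i)
        = t * (∑ i, l1 i * (A.mulVec x i - b i))
          + (1 - t) * (∑ i, l2 i * (A.mulVec x i - b i)) := by
      rw [Finset.mul_sum, Finset.mul_sum, ← Finset.sum_add_distrib]
      refine Finset.sum_congr rfl fun i _ => ?_
      have : (t • l1 + (1 - t) • l2) i = t * l1 i + (1 - t) * l2 i := by
        simp [PiLp.add_apply, PiLp.smul_apply]
      rw [this]; ring
    have hT : (∑ i, l1 i * A.mulVec d i) - (∑ i, l2 i * A.mulVec d i)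
        = -(1/L) * ‖v‖ ^ 2 := by
      rw [← Finset.sum_sub_distrib]
      have e1 : ∑ i, (l1 i * A.mulVec d i - l2 i * A.mulVec d i)
          = ∑ i, u i * A.mulVec d i := by
        refine Finset.sum_congr rfl fun i _ => ?_
        have : u i = l1 i - l2 i := by rw [hu]; simp [PiLp.sub_apply]
        rw [this]; ring
      rw [e1, dot_transpose' A u d]
      exact hvd
    rw [hs1] at hr1'
    rw [hs2] at hr2'
    have comb : t * r1 + (1 - t) * r2
        ≤ f x + (t * (∑ i, l1 i * (A.mulVec x i - b i))
            + (1 - t) * (∑ i, l2 i * (A.mulVec x i - b i)))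
          + (t * (1 - t)) * (L/2 * ‖d‖^2
            + ((∑ i, l1 i * A.mulVec d i) - (∑ i, l2 i * A.mulVec d i))) := by
      have e1' : r1 ≤ f x + (1 - t) * (inner ℝ (G x) d : ℝ) + L/2 * ((1-t)^2 * ‖d‖^2)
          + ((∑ i, l1 i * (A.mulVec x i - b i)) + (1 - t) * ∑ i, l1 i * A.mulVec d i) := by
        linarith [hr1', hd1]
      have e2' : r2 ≤ f x + (-t) * (inner ℝ (G x) d : ℝ) + L/2 * (t^2 * ‖d‖^2)
          + ((∑ i, l2 i * (A.mulVec x i - b i)) + (-t) * ∑ i, l2 i * A.mulVec d i) := by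
        linarith [hr2', hd2]
      exact combine_ineq' t r1 r2 (f x) (inner ℝ (G x) d : ℝ) L (‖d‖^2)
        (∑ i, l1 i * (A.mulVec x i - b i)) (∑ i, l2 i * (A.mulVec x i - b i))
        (∑ i, l1 i * A.mulVec d i) (∑ i, l2 i * A.mulVec d i) ht0 h1t e1' e2'
    rw [hT, hdd] at comb
    have hq : c / L * (t * (1 - t)) / 2 * ‖u‖ ^ 2
        ≤ t * (1 - t) * ((1/L) * ‖v‖ ^ 2 - L/2 * ((1/L)^2 * ‖v‖ ^ 2)) := by
      have hnn : (0:ℝ) ≤ t * (1 - t) / (2 * L) :=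
        div_nonneg (mul_nonneg ht0 h1t) (by linarith)
      have h := mul_le_mul_of_nonneg_right hray hnn
      have e : c / L * (t * (1 - t)) / 2 * ‖u‖ ^ 2
          = (c * ‖u‖ ^ 2) * (t * (1 - t) / (2 * L)) := by
        field_simp
      have e2 : t * (1 - t) * ((1/L) * ‖v‖ ^ 2 - L/2 * ((1/L)^2 * ‖v‖ ^ 2))
          = (‖v‖ ^ 2) * (t * (1 - t) / (2 * L)) := by
        field_simp; ring
      rw [e, e2]
      exact h
    rw [hsc]
    have hnu : ‖l1 - l2‖ = ‖u‖ := by rw [hu]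
    rw [hnu]
    exact final_ineq' _ _ _ (t * (1 - t)) L (1/L) (‖v‖^2) comb
      (by linarith [hq])
end
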